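/- arXiv:1606.02196 — 3 statements merged into one kernel-verified Lean document; each statement's English description precedes it below -/
import Mathlib

section
/- Define the energy E(x,y) = (α_l x + y)²/2 + (α_l γ_l + η) x²/2 + K|x|^q/q. Then along every C¹ solution (x(t),y(t)) of system (S_l), one has (d/dt) E(x(t),y(t)) = (α_l + γ_l)(α_l x(t) + y(t))². -/
open Real Filter Topology Set

noncomputable section

/-- The energy function E(x,y) = (α x + y)²/2 + (αγ + η) x²/2 + K|x|^q/q. -/
def energy (η K q α γ : ℝ) (x y : ℝ) : ℝ :=
  (α * x + y) ^ 2 / 2 + (α * γ + η) * x ^ 2 / 2 + K * |x| ^ q / q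

theorem stmt8 (n : ℕ) (hn : 2 < n) (η K q l α γ : ℝ)
    (hq : 2 < q) (hl : 2 < l)
    (hα : α = 2 / (l - 2)) (hγ : γ = α + 2 - (n:ℝ))
    (x y : ℝ → ℝ)
    (hx : ContDiff ℝ 1 x) (hy : ContDiff ℝ 1 y)
    (hsys : ∀ t : ℝ,
      deriv x t = α * x t + y t ∧
      deriv y t = -η * x t + γ * y t - K * x t * |x t| ^ (q - 2)) :
    ∀ t : ℝ,
      deriv (fun s => energy η K q α γ (x s) (y s)) t =
        (α + γ) * (α * x t + y t) ^ 2 := by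
  intro t
  set u := x t with hu
  set v := y t with hv
  set dx : ℝ := α * u + v with hdx
  set dy : ℝ := -η * u + γ * v - K * u * |u| ^ (q - 2) with hdy
  have hxd : HasDerivAt x dx t := by
    have h := (hx.differentiable one_ne_zero t).hasDerivAt
    rwa [(hsys t).1] at h
  have hyd : HasDerivAt y dy t := by
    have h := (hy.differentiable one_ne_zero t).hasDerivAt
    rwa [(hsys t).2] at h
  have hxy : HasDerivAt (fun s => α * x s + y s) (α * dx + dy) t :=
    (hxd.const_mul α).add hyd
  have h1 : HasDerivAt (fun s => (α * x s + y s) ^ 2 / 2)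
      ((↑2 * (α * u + v) ^ (2 - 1) * (α * dx + dy)) / 2) t :=
    (hxy.pow 2).div_const 2
  have h2 : HasDerivAt (fun s => (α * γ + η) * x s ^ 2 / 2)
      ((α * γ + η) * (↑2 * u ^ (2 - 1) * dx) / 2) t :=
    ((hxd.pow 2).const_mul (α * γ + η)).div_const 2
  have h3 : HasDerivAt (fun s => K * |x s| ^ q / q)
      (K * (q * u * |u| ^ (q - 2) * dx) / q) t := by
    have habs : HasDerivAt (fun w : ℝ => |w| ^ q) (q * u * |u| ^ (q - 2)) u := by
      have h := hasDerivAt_abs_rpow (x := u) (p := q) (by linarith)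
      convert h using 1
      ring
    exact ((habs.comp t hxd).const_mul K).div_const q
  have hE : HasDerivAt (fun s => energy η K q α γ (x s) (y s))
      ((↑2 * (α * u + v) ^ (2 - 1) * (α * dx + dy)) / 2
        + (α * γ + η) * (↑2 * u ^ (2 - 1) * dx) / 2
        + K * (q * u * |u| ^ (q - 2) * dx) / q) t := by
    exact (h1.add h2).add h3
  rw [hE.deriv]
  have hq0 : q ≠ 0 := by linarith
  rw [hdx, hdy]
  field_simp
  ring
end
end

section
/- Assume l = 2* = 2n/(n-2), so that α_l + γ_l = 0. Then E(x,y) = (α_l x + y)²/2 + (α_l γ_l + η) x²/2 + K|x|^q/q is a first integral of system (S_l): E(x(t),y(t)) is constant along every solution. Moreover, if η < (n-2)²/4 and K > 0, then the equation u'' + ((n-1)/r)u' + (η/r²)u + K r^{δ} u|u|^{q-2} = 0 (with δ > -2, q > 2 such that 2(q+δ)/(2+δ) = 2*) admits a positive C² solution u on (0,∞) such that lim_{r→0} u(r) r^{κ(η)} = d for some d ∈ (0,∞) and lim_{r→∞} u(r) r^{n-2-κ(η)} = L for some L ∈ (0,∞). -/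
open Real Filter Topology Set

noncomputable section

/-- κ(η) = ((n-2) - √((n-2)²-4η))/2. -/
def kappa (n : ℕ) (η : ℝ) : ℝ :=
  (((n:ℝ) - 2) - Real.sqrt (((n:ℝ) - 2) ^ 2 - 4 * η)) / 2

lemma hasDerivAt_G (c p b σ r : ℝ) (hr : 0 < r) :
    HasDerivAt (fun r : ℝ => c * r ^ p * (1 + r ^ σ) ^ b)
      (c * p * r ^ (p - 1) * (1 + r ^ σ) ^ b
        + c * b * σ * (r ^ p * r ^ (σ - 1)) * (1 + r ^ σ) ^ (b - 1)) r := by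
  have hW : (0:ℝ) < 1 + r ^ σ := by
    have := Real.rpow_pos_of_pos hr σ; linarith
  have h1 : HasDerivAt (fun r : ℝ => c * r ^ p) (c * (p * r ^ (p - 1))) r :=
    (Real.hasDerivAt_rpow_const (Or.inl hr.ne')).const_mul c
  have h2i : HasDerivAt (fun r : ℝ => 1 + r ^ σ) (σ * r ^ (σ - 1)) r :=
    (Real.hasDerivAt_rpow_const (Or.inl hr.ne')).const_add 1
  have h2o : HasDerivAt (fun y : ℝ => y ^ b) (b * (1 + r ^ σ) ^ (b - 1)) (1 + r ^ σ) :=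
    Real.hasDerivAt_rpow_const (Or.inl hW.ne')
  have h2 := h2o.comp r h2i
  have h := h1.mul h2
  simp only [Function.comp_def] at h
  exact h.congr_deriv (by ring)


set_option maxHeartbeats 2000000 in
theorem stmt9 (n : ℕ) (hn : 2 < n) (η K q δ l α γ : ℝ)
    (hq : 2 < q) (hδ : -2 < δ)
    (hl : l = 2 * (q + δ) / (2 + δ)) (hlcrit : l = 2 * (n:ℝ) / ((n:ℝ) - 2))
    (hα : α = 2 / (l - 2)) (hγ : γ = α + 2 - (n:ℝ)) :
    -- α + γ = 0 and E is a first integral of (S_l)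
    (α + γ = 0) ∧
    (∀ x y : ℝ → ℝ, ContDiff ℝ 1 x → ContDiff ℝ 1 y →
      (∀ t : ℝ,
        deriv x t = α * x t + y t ∧
        deriv y t = -η * x t + γ * y t - K * x t * |x t| ^ (q - 2)) →
      ∀ s t : ℝ, energy η K q α γ (x s) (y s) = energy η K q α γ (x t) (y t)) ∧
    -- existence of a positive solution with the two-sided asymptotics
    (η < ((n:ℝ) - 2) ^ 2 / 4 → 0 < K →
      ∃ u : ℝ → ℝ, ContDiffOn ℝ 2 u (Ioi 0) ∧ (∀ r ∈ Ioi (0:ℝ), 0 < u r) ∧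
        (∀ r ∈ Ioi (0:ℝ),
          deriv (deriv u) r + ((n:ℝ) - 1) / r * deriv u r + η / r ^ 2 * u r +
            K * r ^ δ * u r * |u r| ^ (q - 2) = 0) ∧
        (∃ d ∈ Ioi (0:ℝ),
          Tendsto (fun r => u r * r ^ kappa n η) (𝓝[>] (0:ℝ)) (𝓝 d)) ∧
        (∃ L ∈ Ioi (0:ℝ),
          Tendsto (fun r => u r * r ^ ((n:ℝ) - 2 - kappa n η)) atTop (𝓝 L))) := by
  have hn2' : (0:ℝ) < (n:ℝ) - 2 := by
    have : (2:ℝ) < (n:ℝ) := by exact_mod_cast hn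
    linarith
  have hl2 : l - 2 = 4 / ((n:ℝ) - 2) := by
    rw [hlcrit]; field_simp; ring
  have hαval : α = ((n:ℝ) - 2) / 2 := by
    rw [hα, hl2]; field_simp; ring
  have hsum : α + γ = 0 := by rw [hγ, hαval]; ring
  refine ⟨hsum, ?_, ?_⟩
  · -- first integral
    intro x y hX hY heq s t
    have hq0 : q ≠ 0 := by positivity
    set f : ℝ → ℝ := fun t => energy η K q α γ (x t) (y t) with hf
    have key : ∀ t : ℝ, HasDerivAt f 0 t := by
      intro t
      have hx : HasDerivAt x (deriv x t) t := (hX.differentiable one_ne_zero t).hasDerivAt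
      have hy : HasDerivAt y (deriv y t) t := (hY.differentiable one_ne_zero t).hasDerivAt
      -- |x|^q derivative
      have habs : ∀ a : ℝ, |a| ^ q = (a ^ 2 : ℝ) ^ (q/2) := by
        intro a
        rw [← sq_abs a, ← Real.rpow_natCast |a| 2, ← Real.rpow_mul (abs_nonneg a),
          show ((2:ℕ):ℝ) * (q/2) = q by push_cast; ring]
      have houter : HasDerivAt (fun z : ℝ => z ^ (q/2)) ((q/2) * (x t ^ 2) ^ (q/2 - 1)) (x t ^ 2) :=
        Real.hasDerivAt_rpow_const (Or.inr (by linarith))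
      have hinner : HasDerivAt (fun t => x t ^ 2) (2 * x t ^ 1 * deriv x t) t := hx.pow 2
      have hkey : (x t ^ 2 : ℝ) ^ (q/2 - 1) = |x t| ^ (q - 2) := by
        rw [← sq_abs (x t), ← Real.rpow_natCast |x t| 2, ← Real.rpow_mul (abs_nonneg (x t)),
          show ((2:ℕ):ℝ) * (q/2 - 1) = q - 2 by push_cast; ring]
      have hcube : HasDerivAt (fun t => |x t| ^ q) (q * x t * |x t| ^ (q - 2) * deriv x t) t := by
        have hfun : (fun t => |x t| ^ q) = fun t => (x t ^ 2 : ℝ) ^ (q/2) :=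
          funext fun t => habs (x t)
        rw [hfun]
        exact (houter.comp t hinner).congr_deriv
          (show _ = q * x t * |x t| ^ (q - 2) * deriv x t by rw [hkey]; ring)
      have h1 : HasDerivAt (fun t => (α * x t + y t) ^ 2 / 2)
          ((2 * (α * x t + y t) ^ 1 * (α * deriv x t + deriv y t)) / 2) t :=
        (((hx.const_mul α).add hy).pow 2).div_const 2
      have h2 : HasDerivAt (fun t => (α * γ + η) * x t ^ 2 / 2)
          ((α * γ + η) * (2 * x t ^ 1 * deriv x t) / 2) t :=
        (((hx.pow 2).const_mul (α * γ + η)).div_const 2)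
      have h3 : HasDerivAt (fun t => K * |x t| ^ q / q)
          (K * (q * x t * |x t| ^ (q - 2) * deriv x t) / q) t :=
        ((hcube.const_mul K).div_const q)
      have hsumd := (h1.add h2).add h3
      have hzero : 2 * (α * x t + y t) ^ 1 * (α * deriv x t + deriv y t) / 2 +
          (α * γ + η) * (2 * x t ^ 1 * deriv x t) / 2 +
          K * (q * x t * |x t| ^ (q - 2) * deriv x t) / q = 0 := by
        have hγ : γ = -α := by linarith
        rw [(heq t).1, (heq t).2, hγ]
        field_simp
        ring
      rw [hzero] at hsumd
      exact hsumd
    have hdiff : Differentiable ℝ f := fun t => (key t).differentiableAt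
    have hderiv : ∀ t, deriv f t = 0 := fun t => (key t).deriv
    exact is_const_of_deriv_eq_zero hdiff hderiv s t
  · -- existence
    intro hη hK
    have hn2 : (0:ℝ) < (n:ℝ) - 2 := by
      have : (2:ℝ) < (n:ℝ) := by exact_mod_cast hn
      linarith
    have hq2 : (0:ℝ) < q - 2 := by linarith
    have h2δ : (0:ℝ) < 2 + δ := by linarith
    -- basic constants
    set s : ℝ := Real.sqrt (((n:ℝ) - 2) ^ 2 - 4 * η) with hsdef
    have harg : (0:ℝ) < ((n:ℝ) - 2) ^ 2 - 4 * η := by linarith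
    have hspos : 0 < s := Real.sqrt_pos.mpr harg
    have hs2 : s ^ 2 = ((n:ℝ) - 2) ^ 2 - 4 * η := Real.sq_sqrt harg.le
    set κ : ℝ := kappa n η with hκdef
    have hκ : κ = (((n:ℝ) - 2) - s) / 2 := rfl
    set m : ℝ := 2 / (q - 2) with hmdef
    set σ : ℝ := s * (q - 2) / 2 with hσdef
    have hm : 0 < m := by positivity
    have hσpos : 0 < σ := by positivity
    have hm2 : m * (q - 2) = 2 := by rw [hmdef]; field_simp
    have hms : m * σ = s := by rw [hmdef, hσdef]; field_simp
    have hN : (n:ℝ) = 2 * κ + m * σ + 2 := by rw [hκ, hms]; ring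
    have hη' : η = κ * (κ + m * σ) := by
      rw [hκ, hms]; nlinarith [hs2]
    have hrel : (q + δ) * ((n:ℝ) - 2) = (n:ℝ) * (2 + δ) := by
      have h : 2 * (q + δ) / (2 + δ) = 2 * (n:ℝ) / ((n:ℝ) - 2) := by rw [← hl, hlcrit]
      field_simp at h
      linarith
    have hδσ : δ = σ + κ * (q - 2) - 2 := by
      rw [hσdef, hκ]; nlinarith [hrel]
    -- the solution
    set A : ℝ := (m * σ * (σ + m * σ) / K) ^ (1 / (q - 2)) with hAdef
    have hbase : (0:ℝ) < m * σ * (σ + m * σ) / K := by positivity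
    have hApos : 0 < A := Real.rpow_pos_of_pos hbase _
    have hA : A ^ (q - 2) = m * σ * (σ + m * σ) / K := by
      rw [hAdef, ← Real.rpow_mul hbase.le, one_div, inv_mul_cancel₀ hq2.ne', Real.rpow_one]
    have hKA : K * A ^ (q - 2) = m * σ * (σ + m * σ) := by
      rw [hA]; field_simp
    set u : ℝ → ℝ := fun r : ℝ => A * r ^ (-κ) * (1 + r ^ σ) ^ (-m) with hu
    set v : ℝ → ℝ := fun r : ℝ =>
        A * (-κ) * r ^ (-κ - 1) * (1 + r ^ σ) ^ (-m)
        + (A * (-m) * σ) * r ^ (-κ + σ - 1) * (1 + r ^ σ) ^ (-m - 1) with hv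
    have hderu : ∀ r : ℝ, 0 < r → HasDerivAt u (v r) r := by
      intro r hr
      have h := hasDerivAt_G A (-κ) (-m) σ r hr
      have e : r ^ (-κ + σ - 1) = r ^ (-κ) * r ^ (σ - 1) := by
        rw [show -κ + σ - 1 = -κ + (σ - 1) by ring, Real.rpow_add hr]
      rw [hv, hu]
      simp only []
      rw [e]
      exact h
    set w : ℝ → ℝ := fun r : ℝ =>
        (A * (-κ) * (-κ - 1) * r ^ (-κ - 1 - 1) * (1 + r ^ σ) ^ (-m)
          + A * (-κ) * (-m) * σ * (r ^ (-κ - 1) * r ^ (σ - 1)) * (1 + r ^ σ) ^ (-m - 1))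
        + (A * (-m) * σ * (-κ + σ - 1) * r ^ (-κ + σ - 1 - 1) * (1 + r ^ σ) ^ (-m - 1)
          + A * (-m) * σ * (-m - 1) * σ * (r ^ (-κ + σ - 1) * r ^ (σ - 1)) * (1 + r ^ σ) ^ (-m - 1 - 1)) with hw
    have hderv : ∀ r : ℝ, 0 < r → HasDerivAt v (w r) r := by
      intro r hr
      exact (hasDerivAt_G (A * (-κ)) (-κ - 1) (-m) σ r hr).add
        (hasDerivAt_G (A * (-m) * σ) (-κ + σ - 1) (-m - 1) σ r hr)
    refine ⟨u, ?_, ?_, ?_, ?_, ?_⟩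
    · -- smoothness
      intro r hr
      have hr0 : (0:ℝ) < r := hr
      have h1W : (0:ℝ) < 1 + r ^ σ := by
        have := Real.rpow_pos_of_pos hr0 σ; linarith
      have c1 : ContDiffAt ℝ 2 (fun r : ℝ => A * r ^ (-κ)) r :=
        contDiffAt_const.mul (Real.contDiffAt_rpow_const_of_ne hr0.ne')
      have cinner : ContDiffAt ℝ 2 (fun r : ℝ => 1 + r ^ σ) r :=
        contDiffAt_const.add (Real.contDiffAt_rpow_const_of_ne hr0.ne')
      have couter : ContDiffAt ℝ 2 (fun z : ℝ => z ^ (-m)) (1 + r ^ σ) :=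
        Real.contDiffAt_rpow_const_of_ne h1W.ne'
      exact (c1.mul (couter.comp r cinner)).contDiffWithinAt
    · -- positivity
      intro r hr
      have hr0 : (0:ℝ) < r := hr
      have h1W : (0:ℝ) < 1 + r ^ σ := by
        have := Real.rpow_pos_of_pos hr0 σ; linarith
      exact mul_pos (mul_pos hApos (Real.rpow_pos_of_pos hr0 _)) (Real.rpow_pos_of_pos h1W _)
    · -- the ODE
      intro r hrI
      have hr : (0:ℝ) < r := hrI
      have hW : (0:ℝ) < r ^ σ := Real.rpow_pos_of_pos hr σ
      have h1W : (0:ℝ) < 1 + r ^ σ := by linarith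
      have hd1 : deriv u r = v r := (hderu r hr).deriv
      have hev : deriv u =ᶠ[𝓝 r] v := by
        filter_upwards [isOpen_Ioi.mem_nhds hrI] with t ht
        exact (hderu t ht).deriv
      have hd2 : deriv (deriv u) r = w r := by
        rw [Filter.EventuallyEq.deriv_eq hev]
        exact (hderv r hr).deriv
      -- rpow normalizations
      have e0 : r ^ (-κ) = r ^ (-κ - 1 - 1) * r * r := by
        conv_lhs => rw [show -κ = -κ - 1 - 1 + 1 + 1 by ring]
        rw [Real.rpow_add hr, Real.rpow_add hr, Real.rpow_one]
      have e2 : r ^ (-κ - 1) = r ^ (-κ - 1 - 1) * r := by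
        conv_lhs => rw [show -κ - 1 = -κ - 1 - 1 + 1 by ring]
        rw [Real.rpow_add hr, Real.rpow_one]
      have e4 : r ^ (-κ + σ - 1) = r ^ (-κ - 1 - 1) * r ^ σ * r := by
        conv_lhs => rw [show -κ + σ - 1 = -κ - 1 - 1 + σ + 1 by ring]
        rw [Real.rpow_add hr, Real.rpow_add hr, Real.rpow_one]
      have e5 : r ^ (-κ + σ - 1 - 1) = r ^ (-κ - 1 - 1) * r ^ σ := by
        conv_lhs => rw [show -κ + σ - 1 - 1 = -κ - 1 - 1 + σ by ring]
        rw [Real.rpow_add hr]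
      have e6 : r ^ (σ - 1) = r ^ σ * r⁻¹ := by
        conv_lhs => rw [show σ - 1 = σ + -1 by ring]
        rw [Real.rpow_add hr, Real.rpow_neg hr.le, Real.rpow_one]
      have f1 : (1 + r ^ σ) ^ (-m) = (1 + r ^ σ) ^ (-m - 1 - 1) * (1 + r ^ σ) * (1 + r ^ σ) := by
        conv_lhs => rw [show -m = -m - 1 - 1 + 1 + 1 by ring]
        rw [Real.rpow_add h1W, Real.rpow_add h1W, Real.rpow_one]
      have f2 : (1 + r ^ σ) ^ (-m - 1) = (1 + r ^ σ) ^ (-m - 1 - 1) * (1 + r ^ σ) := by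
        conv_lhs => rw [show -m - 1 = -m - 1 - 1 + 1 by ring]
        rw [Real.rpow_add h1W, Real.rpow_one]
      -- the nonlinear term
      have hu1 : (0:ℝ) < A * r ^ (-κ) * (1 + r ^ σ) ^ (-m) :=
        mul_pos (mul_pos hApos (Real.rpow_pos_of_pos hr _)) (Real.rpow_pos_of_pos h1W _)
      have hmerge1 : r ^ δ * r ^ (-κ) * r ^ (-κ * (q - 2)) = r ^ (-κ - 1 - 1) * r ^ σ := by
        rw [← Real.rpow_add hr, ← Real.rpow_add hr, ← Real.rpow_add hr]
        congr 1
        linear_combination hδσ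
      have hmerge2 : (1 + r ^ σ) ^ (-m) * (1 + r ^ σ) ^ (-m * (q - 2)) = (1 + r ^ σ) ^ (-m - 1 - 1) := by
        rw [← Real.rpow_add h1W]
        congr 1
        linear_combination -hm2
      have hNL : K * r ^ δ * u r * |u r| ^ (q - 2)
          = m * σ * (σ + m * σ) * A * (r ^ (-κ - 1 - 1) * r ^ σ * (1 + r ^ σ) ^ (-m - 1 - 1)) := by
        rw [hu]
        simp only []
        rw [abs_of_pos hu1]
        rw [Real.mul_rpow (mul_pos hApos (Real.rpow_pos_of_pos hr _)).le
            (Real.rpow_pos_of_pos h1W _).le,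
          Real.mul_rpow hApos.le (Real.rpow_pos_of_pos hr _).le,
          ← Real.rpow_mul hr.le, ← Real.rpow_mul h1W.le]
        calc K * r ^ δ * (A * r ^ (-κ) * (1 + r ^ σ) ^ (-m)) *
              (A ^ (q - 2) * r ^ (-κ * (q - 2)) * (1 + r ^ σ) ^ (-m * (q - 2)))
            = (K * A ^ (q - 2)) * A * ((r ^ δ * r ^ (-κ) * r ^ (-κ * (q - 2))) *
              ((1 + r ^ σ) ^ (-m) * (1 + r ^ σ) ^ (-m * (q - 2)))) := by ring
          _ = m * σ * (σ + m * σ) * A *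
              (r ^ (-κ - 1 - 1) * r ^ σ * (1 + r ^ σ) ^ (-m - 1 - 1)) := by
              rw [hKA, hmerge1, hmerge2]
      rw [hd2, hd1, hNL]
      simp only [hu, hv, hw]
      rw [hη']
      rw [hN]
      simp only [e0, e2, e4, e5, e6, f1, f2]
      field_simp
      ring
    · -- limit at 0
      refine ⟨A, hApos, ?_⟩
      have h0 : Tendsto (fun r : ℝ => r ^ σ) (𝓝[>] (0:ℝ)) (𝓝 0) := by
        have hc : ContinuousAt (fun r : ℝ => r ^ σ) 0 :=
          Real.continuousAt_rpow_const 0 σ (Or.inr hσpos.le)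
        have := hc.tendsto
        rw [Real.zero_rpow hσpos.ne'] at this
        exact this.mono_left nhdsWithin_le_nhds
      have h1 : Tendsto (fun r : ℝ => 1 + r ^ σ) (𝓝[>] (0:ℝ)) (𝓝 1) := by
        have := (tendsto_const_nhds (x := (1:ℝ))).add h0
        simpa using this
      have h2 : Tendsto (fun z : ℝ => z ^ (-m)) (𝓝 (1:ℝ)) (𝓝 1) := by
        have hc : ContinuousAt (fun z : ℝ => z ^ (-m)) 1 :=
          Real.continuousAt_rpow_const 1 (-m) (Or.inl one_ne_zero)
        simpa [Real.one_rpow] using hc.tendsto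
      have h3 := (h2.comp h1).const_mul A
      refine Tendsto.congr' ?_ (by simpa using h3)
      filter_upwards [self_mem_nhdsWithin] with r hr
      have hr0 : (0:ℝ) < r := hr
      have hone : r ^ (-κ) * r ^ κ = 1 := by
        rw [← Real.rpow_add hr0]; simp
      show A * ((fun z : ℝ => z ^ (-m)) ∘ fun r : ℝ => 1 + r ^ σ) r = u r * r ^ κ
      rw [hu]
      simp only [Function.comp_def]
      rw [show A * r ^ (-κ) * (1 + r ^ σ) ^ (-m) * r ^ κ
          = A * (1 + r ^ σ) ^ (-m) * (r ^ (-κ) * r ^ κ) by ring, hone]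
      ring
    · -- limit at ∞
      refine ⟨A, hApos, ?_⟩
      have t1 : Tendsto (fun r : ℝ => r ^ σ) atTop atTop := tendsto_rpow_atTop hσpos
      have t2 : Tendsto (fun r : ℝ => (r ^ σ)⁻¹) atTop (𝓝 0) := t1.inv_tendsto_atTop
      have t3 : Tendsto (fun r : ℝ => 1 + (r ^ σ)⁻¹) atTop (𝓝 1) := by
        have := (tendsto_const_nhds (x := (1:ℝ))).add t2
        simpa using this
      have h2 : Tendsto (fun z : ℝ => z ^ (-m)) (𝓝 (1:ℝ)) (𝓝 1) := by
        have hc : ContinuousAt (fun z : ℝ => z ^ (-m)) 1 :=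
          Real.continuousAt_rpow_const 1 (-m) (Or.inl one_ne_zero)
        simpa [Real.one_rpow] using hc.tendsto
      have h3 := (h2.comp t3).const_mul A
      refine Tendsto.congr' ?_ (by simpa using h3)
      filter_upwards [eventually_gt_atTop (0:ℝ)] with r hr0
      have hW : (0:ℝ) < r ^ σ := Real.rpow_pos_of_pos hr0 σ
      have h1W : (0:ℝ) < 1 + r ^ σ := by linarith
      have h1Wi : (0:ℝ) < 1 + (r ^ σ)⁻¹ := by positivity
      show A * ((fun z : ℝ => z ^ (-m)) ∘ fun r : ℝ => 1 + (r ^ σ)⁻¹) r = u r * r ^ ((n:ℝ) - 2 - κ)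
      rw [hu]
      simp only [Function.comp_def]
      have hexp : r ^ (-κ) * r ^ ((n:ℝ) - 2 - κ) = (r ^ σ) ^ m := by
        rw [← Real.rpow_add hr0, ← Real.rpow_mul hr0.le]
        congr 1
        linear_combination hN
      have hfrac : r ^ σ / (1 + r ^ σ) = (1 + (r ^ σ)⁻¹)⁻¹ := by
        rw [show 1 + (r ^ σ)⁻¹ = (1 + r ^ σ) / (r ^ σ) by field_simp; ring, inv_div]
      have hkey : (r ^ σ) ^ m * (1 + r ^ σ) ^ (-m) = (1 + (r ^ σ)⁻¹) ^ (-m) := by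
        rw [Real.rpow_neg h1W.le, Real.rpow_neg h1Wi.le, ← div_eq_mul_inv,
          ← Real.div_rpow hW.le h1W.le, hfrac, Real.inv_rpow h1Wi.le]
      calc A * (1 + (r ^ σ)⁻¹) ^ (-m)
          = A * ((r ^ σ) ^ m * (1 + r ^ σ) ^ (-m)) := by rw [hkey]
        _ = A * (1 + r ^ σ) ^ (-m) * (r ^ (-κ) * r ^ ((n:ℝ) - 2 - κ)) := by rw [hexp]; ring
        _ = A * r ^ (-κ) * (1 + r ^ σ) ^ (-m) * r ^ ((n:ℝ) - 2 - κ) := by ring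

end
end

section
/- Assume l > 2 and l ≠ 2* = 2n/(n-2). Then every periodic solution of system (S_l) is constant; that is, (S_l) admits no nonconstant periodic solutions. -/
open Real Filter Topology Set

noncomputable section

lemma habsderiv {q : ℝ} (hq : 2 < q) (u : ℝ) :
    HasDerivAt (fun u : ℝ => |u| ^ q) (q * (|u| ^ (q - 2) * u)) u := by
  have h1 : HasDerivAt (fun u : ℝ => (u ^ 2 : ℝ)) (2 * u) u := by
    simpa using hasDerivAt_pow 2 u
  have h3 := h1.rpow_const (p := q / 2) (Or.inr (by linarith))
  have hsq : ∀ w : ℝ, (w ^ 2 : ℝ) ^ (q / 2 - 1) = |w| ^ (q - 2) := by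
    intro w
    rw [← sq_abs w, ← Real.rpow_two, ← Real.rpow_mul (abs_nonneg w)]
    ring_nf
  have hfun : (fun u : ℝ => |u| ^ q) = fun u : ℝ => (u ^ 2 : ℝ) ^ (q / 2) := by
    funext w
    rw [← sq_abs w, ← Real.rpow_two, ← Real.rpow_mul (abs_nonneg w)]
    ring_nf
  rw [hfun]
  convert h3 using 1
  rw [hsq u]; ring

theorem stmt10 (n : ℕ) (hn : 2 < n) (η K q l α γ : ℝ)
    (hq : 2 < q) (hl : 2 < l) (hlne : l ≠ 2 * (n:ℝ) / ((n:ℝ) - 2))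
    (hα : α = 2 / (l - 2)) (hγ : γ = α + 2 - (n:ℝ))
    (x y : ℝ → ℝ)
    (hx : ContDiff ℝ 1 x) (hy : ContDiff ℝ 1 y)
    (hsys : ∀ t : ℝ,
      deriv x t = α * x t + y t ∧
      deriv y t = -η * x t + γ * y t - K * x t * |x t| ^ (q - 2))
    (T : ℝ) (hT : 0 < T)
    (hper : ∀ t : ℝ, x (t + T) = x t ∧ y (t + T) = y t) :
    ∀ s t : ℝ, x s = x t ∧ y s = y t := by
  have hn2 : (2 : ℝ) < (n : ℝ) := by exact_mod_cast hn
  have hl2 : (0 : ℝ) < l - 2 := by linarith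
  have hdx : Differentiable ℝ x := hx.differentiable one_ne_zero
  have hdy : Differentiable ℝ y := hy.differentiable one_ne_zero
  set c : ℝ := α + γ with hc_def
  have hc : c ≠ 0 := by
    intro h
    apply hlne
    rw [eq_div_iff (by linarith : (n : ℝ) - 2 ≠ 0)]
    rw [hc_def, hγ, hα] at h
    have h' : 2 / (l - 2) * (l - 2) = 2 := div_mul_cancel₀ 2 (ne_of_gt hl2)
    nlinarith [h, h']
  set f : ℝ → ℝ := fun t => α * x t + y t with hf_def
  have hderiv_x : ∀ t, deriv x t = f t := fun t => (hsys t).1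
  have hcf : Continuous f := ((hx.continuous).const_smul α).add hy.continuous
  have hxd : ∀ t, HasDerivAt x (f t) t := by
    intro t
    have := (hdx t).hasDerivAt
    rwa [hderiv_x t] at this
  -- f has derivative α * f t + deriv y t
  have hfd : ∀ t, HasDerivAt f (α * f t + deriv y t) t := by
    intro t
    exact ((hxd t).const_mul α).add (hdy t).hasDerivAt
  set a : ℝ := η + α * γ with ha_def
  set H : ℝ → ℝ := fun t => (f t) ^ 2 / 2 + a * (x t) ^ 2 / 2 + K * |x t| ^ q / q with hH_def
  have hHd : ∀ t, HasDerivAt H (c * (f t) ^ 2) t := by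
    intro t
    have h1 : HasDerivAt (fun t => (f t) ^ 2 / 2) (f t * (α * f t + deriv y t)) t := by
      have := ((hfd t).pow 2).div_const 2
      exact this.congr_deriv (by ring)
    have h2 : HasDerivAt (fun t => a * (x t) ^ 2 / 2) (a * (x t * f t)) t := by
      have := (((hxd t).pow 2).const_mul a).div_const 2
      exact this.congr_deriv (by ring)
    have h3 : HasDerivAt (fun t => K * |x t| ^ q / q)
        (K * (q * (|x t| ^ (q - 2) * x t) * f t) / q) t := by
      exact (((habsderiv hq (x t)).comp t (hxd t)).const_mul K).div_const q
    have hsum := (h1.add h2).add h3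
    refine hsum.congr_deriv (Eq.symm ?_)
    have hyd := (hsys t).2
    rw [hyd]
    have hy_eq : y t = f t - α * x t := by rw [hf_def]; ring
    have hq0 : q ≠ 0 := by linarith
    field_simp
    rw [hy_eq, hc_def, ha_def]
    ring
  -- periodicity of x, y, f, H
  have hpx : Function.Periodic x T := fun t => (hper t).1
  have hpy : Function.Periodic y T := fun t => (hper t).2
  have hpf : Function.Periodic f T := by
    intro t; simp only [hf_def]; rw [hpx t, hpy t]
  have hHper : H T = H 0 := by
    simp only [hH_def]
    rw [show (T : ℝ) = 0 + T by ring, hpx 0, hpf 0]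
  have hcont2 : Continuous fun t => c * (f t) ^ 2 := (continuous_const.mul (hcf.pow 2))
  have hint : ∫ t in (0:ℝ)..T, c * (f t) ^ 2 = H T - H 0 :=
    intervalIntegral.integral_eq_sub_of_hasDerivAt (fun t _ => hHd t)
      (hcont2.intervalIntegrable 0 T)
  rw [hHper, sub_self] at hint
  rw [intervalIntegral.integral_const_mul] at hint
  have hint0 : ∫ t in (0:ℝ)..T, (f t) ^ 2 = 0 := by
    rcases mul_eq_zero.1 hint with h | h
    · exact absurd h hc
    · exact h
  -- f = 0 everywhere
  have hf0 : ∀ t, f t = 0 := by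
    intro t
    by_contra hne
    obtain ⟨t₀, ht₀, heq⟩ := hpf.exists_mem_Ico₀ hT t
    have ht₀' : f t₀ ≠ 0 := by rw [← heq]; exact hne
    have hpos : 0 < ∫ t in (0:ℝ)..T, (f t) ^ 2 := by
      apply intervalIntegral.integral_pos hT
      · exact (hcf.pow 2).continuousOn
      · intro u _; positivity
      · exact ⟨t₀, ⟨ht₀.1, le_of_lt ht₀.2⟩, by positivity⟩
    rw [hint0] at hpos
    exact lt_irrefl 0 hpos
  -- x constant
  have hx0 : ∀ s t : ℝ, x s = x t := by
    intro s t
    apply is_const_of_deriv_eq_zero hdx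
    intro u; rw [hderiv_x u, hf0 u]
  intro s t
  refine ⟨hx0 s t, ?_⟩
  have hys : y s = -(α * x s) := by
    have := hf0 s; rw [hf_def] at this; simp only at this; linarith
  have hyt : y t = -(α * x t) := by
    have := hf0 t; rw [hf_def] at this; simp only at this; linarith
  rw [hys, hyt, hx0 s t]

end
end
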